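/- Let ε > 0 and μ* ≥ 0, and let Z be an integrable random variable with values in [0,∞) and mean μ = E[Z]. Then there exists a measurable function h : [0,∞) → [0,∞) such that, setting Z' := h(Z): (i) e^{−2ε}·μ* ≤ Z' ≤ e^{2ε}·μ* almost surely; (ii) E[Z'] = μ*; and (iii) E[|Z − Z'|] ≤ |μ − μ*| + 2·(1 + e^{−ε})·E[[Z − e^{ε}·Z̃]_+], where Z̃ is an independent copy of Z. -/

import Mathlib

open MeasureTheory

noncomputable section

lemma clamp_eq (a b z : ℝ) (hab : a ≤ b) :
    max a (min z b) = z + max (a - z) 0 - max (z - b) 0 := by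
  rcases le_total z a with h | h
  · rw [min_eq_left (h.trans hab), max_eq_left h, max_eq_left (by linarith),
      max_eq_right (by linarith)]
    ring
  · rcases le_total z b with h' | h'
    · rw [min_eq_left h', max_eq_right h, max_eq_right (by linarith),
        max_eq_right (by linarith)]
      ring
    · rw [min_eq_right h', max_eq_right hab, max_eq_right (by linarith),
        max_eq_left (by linarith)]
      ring

lemma abs_sub_clamp (a b z : ℝ) (hab : a ≤ b) :
    |z - max a (min z b)| = max (a - z) 0 + max (z - b) 0 := by
  rcases le_total z a with h | h
  · rw [min_eq_left (h.trans hab), max_eq_left h, abs_of_nonpos (by linarith),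
      max_eq_left (by linarith), max_eq_right (by linarith)]
    ring
  · rcases le_total z b with h' | h'
    · rw [min_eq_left h', max_eq_right h, max_eq_right (by linarith),
        max_eq_right (by linarith)]
      simp
    · rw [min_eq_right h', max_eq_right hab, abs_of_nonneg (by linarith),
        max_eq_right (by linarith), max_eq_left (by linarith)]
      ring

lemma sub_eq_pos_sub_pos (z t : ℝ) : z - t = max (z - t) 0 - max (t - z) 0 := by
  rcases le_total z t with h | h
  · rw [max_eq_right (by linarith), max_eq_left (by linarith)]; ring
  · rw [max_eq_left (by linarith), max_eq_right (by linarith)]; ring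

lemma max_const_mul (c w : ℝ) (hc : 0 ≤ c) : max (c * w) 0 = c * max w 0 := by
  rcases le_total w 0 with h | h
  · rw [max_eq_right (by nlinarith), max_eq_right h, mul_zero]
  · rw [max_eq_left (by nlinarith), max_eq_left h]

lemma abs_min_le (z c c' : ℝ) : |min z c - min z c'| ≤ |c - c'| := by
  simpa using abs_min_sub_min_le_max z c z c'

lemma prod_int_fst {Ω : Type} [MeasurableSpace Ω] {μ : Measure Ω} [IsProbabilityMeasure μ]
    {Z : Ω → ℝ} (hZint : Integrable Z μ) :
    Integrable (fun p : Ω × Ω => Z p.1) (μ.prod μ) := by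
  simpa using hZint.mul_prod (integrable_const (1:ℝ))

lemma prod_int_snd {Ω : Type} [MeasurableSpace Ω] {μ : Measure Ω} [IsProbabilityMeasure μ]
    {Z : Ω → ℝ} (hZint : Integrable Z μ) :
    Integrable (fun p : Ω × Ω => Z p.2) (μ.prod μ) := by
  simpa using (integrable_const (1:ℝ)).mul_prod hZint

lemma D_integrable {Ω : Type} [MeasurableSpace Ω] {μ : Measure Ω} [IsProbabilityMeasure μ]
    {Z : Ω → ℝ} (hZint : Integrable Z μ) (ε : ℝ) :
    Integrable (fun p : Ω × Ω => max (Z p.1 - Real.exp ε * Z p.2) 0) (μ.prod μ) :=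
  ((prod_int_fst hZint).sub ((prod_int_snd hZint).const_mul (Real.exp ε))).pos_part

lemma D_lower₁ {Ω : Type} [MeasurableSpace Ω] (μ : Measure Ω) [IsProbabilityMeasure μ]
    (Z : Ω → ℝ) (hZm : Measurable Z) (hZint : Integrable Z μ) (ε s a : ℝ)
    (ha : Real.exp ε * s ≤ a) :
    (μ {ω | Z ω < s}).toReal * ∫ ω, max (Z ω - a) 0 ∂μ ≤
      ∫ p, max (Z p.1 - Real.exp ε * Z p.2) 0 ∂(μ.prod μ) := by
  have hS : MeasurableSet {ω | Z ω < s} := measurableSet_lt hZm measurable_const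
  set f : Ω → ℝ := fun ω => max (Z ω - a) 0 with hf
  set g : Ω → ℝ := Set.indicator {ω | Z ω < s} (fun _ => (1:ℝ)) with hg
  have hgint : ∫ ω, g ω ∂μ = (μ {ω | Z ω < s}).toReal := by
    rw [hg, integral_indicator_const (1:ℝ) hS]; simp [Measure.real]
  have hle : ∀ p : Ω × Ω, f p.1 * g p.2 ≤ max (Z p.1 - Real.exp ε * Z p.2) 0 := by
    intro p
    by_cases hp : Z p.2 < s
    · have : g p.2 = 1 := by simp [hg, Set.indicator_apply, hp]
      rw [this, mul_one]
      refine max_le_max (sub_le_sub_left ?_ _) le_rfl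
      calc Real.exp ε * Z p.2 ≤ Real.exp ε * s :=
            mul_le_mul_of_nonneg_left hp.le (Real.exp_pos ε).le
        _ ≤ a := ha
    · have : g p.2 = 0 := by simp [hg, Set.indicator_apply, hp]
      rw [this, mul_zero]
      exact le_max_right _ _
  calc (μ {ω | Z ω < s}).toReal * ∫ ω, max (Z ω - a) 0 ∂μ
      = (∫ ω, f ω ∂μ) * ∫ ω, g ω ∂μ := by rw [hgint]; ring
    _ = ∫ p : Ω × Ω, f p.1 * g p.2 ∂(μ.prod μ) := (integral_prod_mul f g).symm
    _ ≤ ∫ p, max (Z p.1 - Real.exp ε * Z p.2) 0 ∂(μ.prod μ) := by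
        refine integral_mono_of_nonneg ?_ (D_integrable hZint ε) (Filter.Eventually.of_forall hle)
        refine Filter.Eventually.of_forall fun p => mul_nonneg (le_max_right _ _) ?_
        exact Set.indicator_nonneg (fun _ _ => zero_le_one) _

lemma D_lower₂ {Ω : Type} [MeasurableSpace Ω] (μ : Measure Ω) [IsProbabilityMeasure μ]
    (Z : Ω → ℝ) (hZm : Measurable Z) (hZint : Integrable Z μ) (ε s : ℝ) :
    (μ {ω | s ≤ Z ω}).toReal * ∫ ω, max (s - Real.exp ε * Z ω) 0 ∂μ ≤
      ∫ p, max (Z p.1 - Real.exp ε * Z p.2) 0 ∂(μ.prod μ) := by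
  have hS : MeasurableSet {ω | s ≤ Z ω} := measurableSet_le measurable_const hZm
  set f : Ω → ℝ := fun ω => max (s - Real.exp ε * Z ω) 0 with hf
  set g : Ω → ℝ := Set.indicator {ω | s ≤ Z ω} (fun _ => (1:ℝ)) with hg
  have hgint : ∫ ω, g ω ∂μ = (μ {ω | s ≤ Z ω}).toReal := by
    rw [hg, integral_indicator_const (1:ℝ) hS]; simp [Measure.real]
  have hle : ∀ p : Ω × Ω, g p.1 * f p.2 ≤ max (Z p.1 - Real.exp ε * Z p.2) 0 := by
    intro p
    by_cases hp : s ≤ Z p.1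
    · have : g p.1 = 1 := by simp [hg, Set.indicator_apply, hp]
      rw [this, one_mul]
      exact max_le_max (sub_le_sub_right hp _) le_rfl
    · have : g p.1 = 0 := by simp [hg, Set.indicator_apply, hp]
      rw [this, zero_mul]
      exact le_max_right _ _
  calc (μ {ω | s ≤ Z ω}).toReal * ∫ ω, max (s - Real.exp ε * Z ω) 0 ∂μ
      = (∫ ω, g ω ∂μ) * ∫ ω, f ω ∂μ := by rw [hgint]
    _ = ∫ p : Ω × Ω, g p.1 * f p.2 ∂(μ.prod μ) := (integral_prod_mul g f).symm
    _ ≤ ∫ p, max (Z p.1 - Real.exp ε * Z p.2) 0 ∂(μ.prod μ) := by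
        refine integral_mono_of_nonneg ?_ (D_integrable hZint ε) (Filter.Eventually.of_forall hle)
        refine Filter.Eventually.of_forall fun p => mul_nonneg ?_ (le_max_right _ _)
        exact Set.indicator_nonneg (fun _ _ => zero_le_one) _

lemma clamp_bdd_int {Ω : Type} [MeasurableSpace Ω] (μ : Measure Ω) [IsProbabilityMeasure μ]
    {Z : Ω → ℝ} (hZm : Measurable Z) (a c : ℝ) :
    Integrable (fun ω => max a (min (Z ω) c)) μ := by
  refine Integrable.mono' (integrable_const (max |a| |c|))
    ((measurable_const.max (hZm.min measurable_const)).aestronglyMeasurable)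
    (Filter.Eventually.of_forall fun ω => ?_)
  rw [Real.norm_eq_abs, abs_le]
  constructor
  · have h1 := le_max_left a (min (Z ω) c)
    have h2 := neg_abs_le a
    have h3 := le_max_left |a| |c|
    linarith
  · refine max_le ((le_abs_self a).trans (le_max_left _ _)) ?_
    exact (min_le_right _ _).trans ((le_abs_self c).trans (le_max_right _ _))

lemma cont_family₁ {Ω : Type} [MeasurableSpace Ω] (μ : Measure Ω) [IsProbabilityMeasure μ]
    {Z : Ω → ℝ} (hZm : Measurable Z) (a : ℝ) :
    Continuous (fun c => ∫ ω, max a (min (Z ω) c) ∂μ) := by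
  have hlip : LipschitzWith 1 (fun c => ∫ ω, max a (min (Z ω) c) ∂μ) := by
    refine LipschitzWith.of_dist_le_mul fun c c' => ?_
    rw [Real.dist_eq, Real.dist_eq, NNReal.coe_one, one_mul]
    have hint := clamp_bdd_int μ hZm a
    rw [← integral_sub (hint c) (hint c')]
    calc |∫ ω, (max a (min (Z ω) c) - max a (min (Z ω) c')) ∂μ|
        ≤ ∫ ω, |max a (min (Z ω) c) - max a (min (Z ω) c')| ∂μ := by
          simpa [Real.norm_eq_abs] using
            norm_integral_le_integral_norm (fun ω => max a (min (Z ω) c) - max a (min (Z ω) c'))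
      _ ≤ ∫ _ω, |c - c'| ∂μ := by
          refine integral_mono ((hint c).sub (hint c')).abs (integrable_const _) fun ω => ?_
          calc |max a (min (Z ω) c) - max a (min (Z ω) c')|
              ≤ |min (Z ω) c - min (Z ω) c'| := by
                simpa using abs_max_sub_max_le_max a (min (Z ω) c) a (min (Z ω) c')
            _ ≤ |c - c'| := abs_min_le _ _ _
      _ = |c - c'| := by simp [measure_univ]
  exact hlip.continuous

lemma cont_family₂ {Ω : Type} [MeasurableSpace Ω] (μ : Measure Ω) [IsProbabilityMeasure μ]
    {Z : Ω → ℝ} (hZm : Measurable Z) (b : ℝ) :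
    Continuous (fun c => ∫ ω, max c (min (Z ω) b) ∂μ) := by
  have hlip : LipschitzWith 1 (fun c => ∫ ω, max c (min (Z ω) b) ∂μ) := by
    refine LipschitzWith.of_dist_le_mul fun c c' => ?_
    rw [Real.dist_eq, Real.dist_eq, NNReal.coe_one, one_mul]
    have hint : ∀ c : ℝ, Integrable (fun ω => max c (min (Z ω) b)) μ := fun c =>
      clamp_bdd_int μ hZm c b
    rw [← integral_sub (hint c) (hint c')]
    calc |∫ ω, (max c (min (Z ω) b) - max c' (min (Z ω) b)) ∂μ|
        ≤ ∫ ω, |max c (min (Z ω) b) - max c' (min (Z ω) b)| ∂μ := by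
          simpa [Real.norm_eq_abs] using
            norm_integral_le_integral_norm (fun ω => max c (min (Z ω) b) - max c' (min (Z ω) b))
      _ ≤ ∫ _ω, |c - c'| ∂μ := by
          refine integral_mono ((hint c).sub (hint c')).abs (integrable_const _) fun ω => ?_
          simpa using abs_max_sub_max_le_max c (min (Z ω) b) c' (min (Z ω) b)
      _ = |c - c'| := by simp [measure_univ]
  exact hlip.continuous
set_option maxHeartbeats 1000000 in
/-- Scalar random variable adjustment for bounded ratio:
a nonnegative integrable random variable `Z` can be post-processed into `Z' = h(Z)`
supported in `[e^{-2ε}μ*, e^{2ε}μ*]` with mean exactly `μ*`, moving by at most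
`|μ - μ*| + 2(1 + e^{-ε})·E[[Z - e^ε·Z̃]₊]` in expectation, `Z̃` an independent copy of `Z`. -/
theorem rv_correction_scalar {Ω : Type} [MeasurableSpace Ω]
    (μ : Measure Ω) [IsProbabilityMeasure μ]
    (ε μs : ℝ) (hε : 0 < ε) (hμs : 0 ≤ μs)
    (Z : Ω → ℝ) (hZm : Measurable Z) (hZint : Integrable Z μ)
    (hZ0 : ∀ᵐ ω ∂μ, 0 ≤ Z ω) :
    ∃ h : ℝ → ℝ, Measurable h ∧ (∀ t, 0 ≤ t → 0 ≤ h t) ∧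
      (∀ᵐ ω ∂μ, Real.exp (-(2*ε)) * μs ≤ h (Z ω) ∧ h (Z ω) ≤ Real.exp (2*ε) * μs) ∧
      (∫ ω, h (Z ω) ∂μ) = μs ∧
      (∫ ω, |Z ω - h (Z ω)| ∂μ) ≤
        |(∫ ω, Z ω ∂μ) - μs| +
          2 * (1 + Real.exp (-ε)) *
            ∫ p, max (Z p.1 - Real.exp ε * Z p.2) 0 ∂(μ.prod μ) := by
  have hD0 : 0 ≤ ∫ p, max (Z p.1 - Real.exp ε * Z p.2) 0 ∂(μ.prod μ) :=
    integral_nonneg fun p => le_max_right _ _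
  have h1x : (0:ℝ) < 1 + Real.exp (-ε) := by positivity
  rcases eq_or_lt_of_le hμs with rfl | hμ0
  · -- μs = 0
    refine ⟨fun _ => 0, measurable_const, fun t _ => le_rfl,
      Filter.Eventually.of_forall fun ω => by simp, by simp, ?_⟩
    have h1 : (∫ ω, |Z ω - 0| ∂μ) = ∫ ω, Z ω ∂μ := by
      refine integral_congr_ae ?_
      filter_upwards [hZ0] with ω hω
      rw [sub_zero, abs_of_nonneg hω]
    rw [h1]
    have h2 : (∫ ω, Z ω ∂μ) ≤ |(∫ ω, Z ω ∂μ) - 0| := by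
      rw [sub_zero]; exact le_abs_self _
    nlinarith
  -- main case 0 < μs
  set m := ∫ ω, Z ω ∂μ with hm
  set L : ℝ := Real.exp (-(2*ε)) * μs with hL
  set U : ℝ := Real.exp (2*ε) * μs with hU
  set s₁ : ℝ := Real.exp (-ε) * μs with hs₁
  set s₂ : ℝ := Real.exp ε * μs with hs₂
  have hex : (0:ℝ) < Real.exp ε := Real.exp_pos ε
  have hexn : (0:ℝ) < Real.exp (-ε) := Real.exp_pos _
  have hx1 : Real.exp (-ε) < 1 := by
    have : Real.exp (-ε) < Real.exp 0 := Real.exp_lt_exp.mpr (by linarith)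
    simpa using this
  have hxe : Real.exp (-ε) * Real.exp ε = 1 := by
    rw [← Real.exp_add]; simp
  have he1 : Real.exp ε * s₁ = μs := by
    rw [hs₁, ← mul_assoc, ← Real.exp_add]; simp
  have he2 : Real.exp ε * s₂ = U := by
    rw [hs₂, hU, ← mul_assoc, ← Real.exp_add]
    have : ε + ε = 2*ε := by ring
    rw [this]
  have heL : Real.exp ε * L = s₁ := by
    rw [hL, hs₁, ← mul_assoc, ← Real.exp_add]
    have : ε + -(2*ε) = -ε := by ring
    rw [this]
  have hLs₁ : L ≤ s₁ := by
    rw [hL, hs₁]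
    exact mul_le_mul_of_nonneg_right (Real.exp_le_exp.mpr (by linarith)) hμs
  have hs₁μ : s₁ ≤ μs := by
    rw [hs₁]; nlinarith
  have hμs₂ : μs ≤ s₂ := by
    rw [hs₂]; nlinarith [Real.one_le_exp hε.le]
  have hs₂U : s₂ ≤ U := by
    rw [hs₂, hU]
    exact mul_le_mul_of_nonneg_right (Real.exp_le_exp.mpr (by linarith)) hμs
  have hLμ : L ≤ μs := hLs₁.trans hs₁μ
  have hμU : μs ≤ U := hμs₂.trans hs₂U
  have hLU : L ≤ U := hLμ.trans hμU
  have hL0 : 0 < L := by rw [hL]; positivity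
  -- integrability toolkit
  have Ipos : ∀ a : ℝ, Integrable (fun ω => max (Z ω - a) 0) μ := fun a =>
    (hZint.sub (integrable_const a)).pos_part
  have Ineg : ∀ a : ℝ, Integrable (fun ω => max (a - Z ω) 0) μ := fun a =>
    ((integrable_const a).sub hZint).pos_part
  have Npos : ∀ a : ℝ, 0 ≤ ∫ ω, max (Z ω - a) 0 ∂μ := fun a =>
    integral_nonneg fun ω => le_max_right _ _
  have Nneg : ∀ a : ℝ, 0 ≤ ∫ ω, max (a - Z ω) 0 ∂μ := fun a =>
    integral_nonneg fun ω => le_max_right _ _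
  have mono_pos : ∀ a b : ℝ, a ≤ b →
      (∫ ω, max (Z ω - b) 0 ∂μ) ≤ ∫ ω, max (Z ω - a) 0 ∂μ := fun a b hab =>
    integral_mono (Ipos b) (Ipos a) fun ω => max_le_max (sub_le_sub_left hab _) le_rfl
  have mono_neg : ∀ a b : ℝ, a ≤ b →
      (∫ ω, max (a - Z ω) 0 ∂μ) ≤ ∫ ω, max (b - Z ω) 0 ∂μ := fun a b hab =>
    integral_mono (Ineg a) (Ineg b) fun ω => max_le_max (sub_le_sub_right hab _) le_rfl
  have mean_diff : ∀ t : ℝ,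
      (∫ ω, max (Z ω - t) 0 ∂μ) - (∫ ω, max (t - Z ω) 0 ∂μ) = m - t := by
    intro t
    rw [← integral_sub (Ipos t) (Ineg t)]
    have h1 : (∫ ω, (max (Z ω - t) 0 - max (t - Z ω) 0) ∂μ) = ∫ ω, (Z ω - t) ∂μ :=
      integral_congr_ae (Filter.Eventually.of_forall fun ω =>
        (sub_eq_pos_sub_pos (Z ω) t).symm)
    rw [h1, integral_sub hZint (integrable_const t), integral_const]
    simp [hm]
  -- probabilities
  have hprc : ∀ s : ℝ, (μ {ω | s ≤ Z ω}).toReal = 1 - (μ {ω | Z ω < s}).toReal := by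
    intro s
    have hS : MeasurableSet {ω | Z ω < s} := measurableSet_lt hZm measurable_const
    have hset : {ω | s ≤ Z ω} = {ω | Z ω < s}ᶜ := by ext ω; simp [not_lt]
    rw [hset, measure_compl hS (measure_ne_top _ _), measure_univ,
      ENNReal.toReal_sub_of_le prob_le_one (by simp)]
    simp
  have hple : ∀ s : ℝ, (μ {ω | Z ω < s}).toReal ≤ 1 := by
    intro s
    have := prob_le_one (μ := μ) (s := {ω | Z ω < s})
    simpa using ENNReal.toReal_mono (by simp) this
  have hpnn : ∀ s : ℝ, 0 ≤ (μ {ω | Z ω < s}).toReal := fun s => ENNReal.toReal_nonneg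
  -- D lower bounds
  have hDa : (μ {ω | Z ω < s₁}).toReal * ∫ ω, max (Z ω - μs) 0 ∂μ ≤
      ∫ p, max (Z p.1 - Real.exp ε * Z p.2) 0 ∂(μ.prod μ) :=
    D_lower₁ μ Z hZm hZint ε s₁ μs he1.le
  have hDc : (μ {ω | Z ω < s₂}).toReal * ∫ ω, max (Z ω - U) 0 ∂μ ≤
      ∫ p, max (Z p.1 - Real.exp ε * Z p.2) 0 ∂(μ.prod μ) :=
    D_lower₁ μ Z hZm hZint ε s₂ U he2.le
  have hDb : (1 - (μ {ω | Z ω < s₁}).toReal) *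
      (Real.exp ε * ∫ ω, max (L - Z ω) 0 ∂μ) ≤
      ∫ p, max (Z p.1 - Real.exp ε * Z p.2) 0 ∂(μ.prod μ) := by
    have hmain := D_lower₂ μ Z hZm hZint ε s₁
    rw [hprc s₁] at hmain
    have hrw : (∫ ω, max (s₁ - Real.exp ε * Z ω) 0 ∂μ) =
        Real.exp ε * ∫ ω, max (L - Z ω) 0 ∂μ := by
      rw [← integral_const_mul]
      refine integral_congr_ae (Filter.Eventually.of_forall fun ω => ?_)
      show max (s₁ - Real.exp ε * Z ω) 0 = Real.exp ε * max (L - Z ω) 0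
      rw [← max_const_mul (Real.exp ε) (L - Z ω) hex.le]
      congr 1
      rw [mul_sub, heL]
    rw [hrw] at hmain
    exact hmain
  have hDd : (1 - (μ {ω | Z ω < s₂}).toReal) *
      (Real.exp ε * ∫ ω, max (μs - Z ω) 0 ∂μ) ≤
      ∫ p, max (Z p.1 - Real.exp ε * Z p.2) 0 ∂(μ.prod μ) := by
    have hmain := D_lower₂ μ Z hZm hZint ε s₂
    rw [hprc s₂] at hmain
    have hrw : (∫ ω, max (s₂ - Real.exp ε * Z ω) 0 ∂μ) =
        Real.exp ε * ∫ ω, max (μs - Z ω) 0 ∂μ := by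
      rw [← integral_const_mul]
      refine integral_congr_ae (Filter.Eventually.of_forall fun ω => ?_)
      show max (s₂ - Real.exp ε * Z ω) 0 = Real.exp ε * max (μs - Z ω) 0
      rw [← max_const_mul (Real.exp ε) (μs - Z ω) hex.le]
      congr 1
      rw [mul_sub, ← hs₂]
    rw [hrw] at hmain
    exact hmain
  set D := ∫ p, max (Z p.1 - Real.exp ε * Z p.2) 0 ∂(μ.prod μ) with hD
  by_cases hM : μs ≤ ∫ ω, max L (min (Z ω) U) ∂μ
  · -- family 1 : h t = max L (min t c)
    obtain ⟨c, hcmem, hc⟩ : ∃ c ∈ Set.Icc L U, (∫ ω, max L (min (Z ω) c) ∂μ) = μs := by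
      have hcont := (cont_family₁ μ hZm L).continuousOn (s := Set.Icc L U)
      have hFL : (∫ ω, max L (min (Z ω) L) ∂μ) = L := by
        have hpt : ∀ ω, max L (min (Z ω) L) = L := fun ω => max_eq_left (min_le_right _ _)
        rw [integral_congr_ae (Filter.Eventually.of_forall hpt)]
        simp [measure_univ]
      have hmem : μs ∈ Set.Icc ((fun c => ∫ ω, max L (min (Z ω) c) ∂μ) L)
          ((fun c => ∫ ω, max L (min (Z ω) c) ∂μ) U) := by
        constructor
        · simpa [hFL] using hLμ
        · exact hM
      obtain ⟨c, hc1, hc2⟩ := intermediate_value_Icc hLU hcont hmem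
      exact ⟨c, hc1, hc2⟩
    have hLc : L ≤ c := hcmem.1
    have hcU : c ≤ U := hcmem.2
    refine ⟨fun t => max L (min t c),
      (continuous_const.max (continuous_id.min continuous_const)).measurable,
      fun t _ => le_trans hL0.le (le_max_left _ _),
      Filter.Eventually.of_forall fun ω =>
        ⟨le_max_left _ _, max_le hLU ((min_le_right _ _).trans hcU)⟩,
      hc, ?_⟩
    set W := ∫ ω, max (L - Z ω) 0 ∂μ with hWdef
    set T := ∫ ω, max (Z ω - c) 0 ∂μ with hTdef
    have hWnn : 0 ≤ W := Nneg L
    have habs : (∫ ω, |Z ω - max L (min (Z ω) c)| ∂μ) = W + T := by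
      rw [hWdef, hTdef, ← integral_add (Ineg L) (Ipos c)]
      exact integral_congr_ae (Filter.Eventually.of_forall fun ω =>
        abs_sub_clamp L c (Z ω) hLc)
    have hadd : Integrable (fun ω => Z ω + max (L - Z ω) 0) μ := hZint.add (Ineg L)
    have hmean : μs = m + W - T := by
      rw [← hc]
      have hpt : (∫ ω, max L (min (Z ω) c) ∂μ) =
          ∫ ω, (Z ω + max (L - Z ω) 0 - max (Z ω - c) 0) ∂μ :=
        integral_congr_ae (Filter.Eventually.of_forall fun ω => clamp_eq L c (Z ω) hLc)
      rw [hpt, integral_sub hadd (Ipos c), integral_add hZint (Ineg L)]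
    rw [habs]
    rcases le_total μs m with hcase | hcase
    · -- need W ≤ (1+x) D
      have hkey : W ≤ (1 + Real.exp (-ε)) * D := by
        rcases le_or_gt (1/(1 + Real.exp (-ε))) (μ {ω | Z ω < s₁}).toReal with hp | hp
        · have hQ1 : W ≤ ∫ ω, max (μs - Z ω) 0 ∂μ := mono_neg L μs hLμ
          have hQ2 : (∫ ω, max (μs - Z ω) 0 ∂μ) ≤ ∫ ω, max (Z ω - μs) 0 ∂μ := by
            have := mean_diff μs; linarith
          have hp1 : 1 ≤ (1 + Real.exp (-ε)) * (μ {ω | Z ω < s₁}).toReal := by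
            rw [div_le_iff₀ h1x] at hp; linarith
          calc W ≤ ∫ ω, max (Z ω - μs) 0 ∂μ := hQ1.trans hQ2
            _ = 1 * ∫ ω, max (Z ω - μs) 0 ∂μ := (one_mul _).symm
            _ ≤ ((1 + Real.exp (-ε)) * (μ {ω | Z ω < s₁}).toReal) *
                ∫ ω, max (Z ω - μs) 0 ∂μ :=
              mul_le_mul_of_nonneg_right hp1 (Npos μs)
            _ = (1 + Real.exp (-ε)) *
                ((μ {ω | Z ω < s₁}).toReal * ∫ ω, max (Z ω - μs) 0 ∂μ) := by ring
            _ ≤ (1 + Real.exp (-ε)) * D := mul_le_mul_of_nonneg_left hDa h1x.le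
        · have hstep : Real.exp (-ε) <
              (1 + Real.exp (-ε)) * (1 - (μ {ω | Z ω < s₁}).toReal) := by
            rw [lt_div_iff₀ h1x] at hp; nlinarith
          have hEW : 0 ≤ Real.exp ε * W := mul_nonneg hex.le hWnn
          calc W = (Real.exp (-ε) * Real.exp ε) * W := by rw [hxe, one_mul]
            _ = Real.exp (-ε) * (Real.exp ε * W) := by ring
            _ ≤ ((1 + Real.exp (-ε)) * (1 - (μ {ω | Z ω < s₁}).toReal)) *
                (Real.exp ε * W) := mul_le_mul_of_nonneg_right hstep.le hEW
            _ = (1 + Real.exp (-ε)) *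
                ((1 - (μ {ω | Z ω < s₁}).toReal) * (Real.exp ε * W)) := by ring
            _ ≤ (1 + Real.exp (-ε)) * D := mul_le_mul_of_nonneg_left hDb h1x.le
      have habs2 : |m - μs| = m - μs := abs_of_nonneg (by linarith)
      rw [habs2]
      linarith
    · -- need T ≤ (1+x) D
      have hcμ : μs ≤ c := by
        rw [← hc]
        calc (∫ ω, max L (min (Z ω) c) ∂μ) ≤ ∫ _ω, c ∂μ :=
              integral_mono (clamp_bdd_int μ hZm L c) (integrable_const c)
                (fun ω => max_le hLc (min_le_right _ _))
          _ = c := by simp [measure_univ]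
      have hkey : T ≤ (1 + Real.exp (-ε)) * D := by
        rcases le_or_gt (1/(1 + Real.exp (-ε))) (μ {ω | Z ω < s₁}).toReal with hp | hp
        · have hQ1 : T ≤ ∫ ω, max (Z ω - μs) 0 ∂μ := mono_pos μs c hcμ
          have hp1 : 1 ≤ (1 + Real.exp (-ε)) * (μ {ω | Z ω < s₁}).toReal := by
            rw [div_le_iff₀ h1x] at hp; linarith
          calc T ≤ ∫ ω, max (Z ω - μs) 0 ∂μ := hQ1
            _ = 1 * ∫ ω, max (Z ω - μs) 0 ∂μ := (one_mul _).symm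
            _ ≤ ((1 + Real.exp (-ε)) * (μ {ω | Z ω < s₁}).toReal) *
                ∫ ω, max (Z ω - μs) 0 ∂μ :=
              mul_le_mul_of_nonneg_right hp1 (Npos μs)
            _ = (1 + Real.exp (-ε)) *
                ((μ {ω | Z ω < s₁}).toReal * ∫ ω, max (Z ω - μs) 0 ∂μ) := by ring
            _ ≤ (1 + Real.exp (-ε)) * D := mul_le_mul_of_nonneg_left hDa h1x.le
        · have hstep : Real.exp (-ε) <
              (1 + Real.exp (-ε)) * (1 - (μ {ω | Z ω < s₁}).toReal) := by
            rw [lt_div_iff₀ h1x] at hp; nlinarith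
          have hEW : 0 ≤ Real.exp ε * W := mul_nonneg hex.le hWnn
          have hTW : T ≤ W := by linarith
          calc T ≤ W := hTW
            _ = (Real.exp (-ε) * Real.exp ε) * W := by rw [hxe, one_mul]
            _ = Real.exp (-ε) * (Real.exp ε * W) := by ring
            _ ≤ ((1 + Real.exp (-ε)) * (1 - (μ {ω | Z ω < s₁}).toReal)) *
                (Real.exp ε * W) := mul_le_mul_of_nonneg_right hstep.le hEW
            _ = (1 + Real.exp (-ε)) *
                ((1 - (μ {ω | Z ω < s₁}).toReal) * (Real.exp ε * W)) := by ring
            _ ≤ (1 + Real.exp (-ε)) * D := mul_le_mul_of_nonneg_left hDb h1x.le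
      have habs2 : |m - μs| = μs - m := by rw [abs_of_nonpos (by linarith : m - μs ≤ 0)]; ring
      rw [habs2]
      linarith
  · -- family 2 : h t = max c (min t U)
    push_neg at hM
    obtain ⟨c, hcmem, hc⟩ : ∃ c ∈ Set.Icc L U, (∫ ω, max c (min (Z ω) U) ∂μ) = μs := by
      have hcont := (cont_family₂ μ hZm U).continuousOn (s := Set.Icc L U)
      have hFU : (∫ ω, max U (min (Z ω) U) ∂μ) = U := by
        have hpt : ∀ ω, max U (min (Z ω) U) = U := fun ω => max_eq_left (min_le_right _ _)
        rw [integral_congr_ae (Filter.Eventually.of_forall hpt)]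
        simp [measure_univ]
      have hmem : μs ∈ Set.Icc ((fun c => ∫ ω, max c (min (Z ω) U) ∂μ) L)
          ((fun c => ∫ ω, max c (min (Z ω) U) ∂μ) U) := by
        constructor
        · exact hM.le
        · simpa [hFU] using hμU
      obtain ⟨c, hc1, hc2⟩ := intermediate_value_Icc hLU hcont hmem
      exact ⟨c, hc1, hc2⟩
    have hLc : L ≤ c := hcmem.1
    have hcU : c ≤ U := hcmem.2
    refine ⟨fun t => max c (min t U),
      (continuous_const.max (continuous_id.min continuous_const)).measurable,
      fun t _ => le_trans (hL0.le.trans hLc) (le_max_left _ _),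
      Filter.Eventually.of_forall fun ω =>
        ⟨hLc.trans (le_max_left _ _), max_le hcU (min_le_right _ _)⟩,
      hc, ?_⟩
    set A := ∫ ω, max (c - Z ω) 0 ∂μ with hAdef
    set Tu := ∫ ω, max (Z ω - U) 0 ∂μ with hTudef
    have hTunn : 0 ≤ Tu := Npos U
    have hQnn : 0 ≤ ∫ ω, max (μs - Z ω) 0 ∂μ := Nneg μs
    have habs : (∫ ω, |Z ω - max c (min (Z ω) U)| ∂μ) = A + Tu := by
      rw [hAdef, hTudef, ← integral_add (Ineg c) (Ipos U)]
      exact integral_congr_ae (Filter.Eventually.of_forall fun ω =>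
        abs_sub_clamp c U (Z ω) hcU)
    have hadd : Integrable (fun ω => Z ω + max (c - Z ω) 0) μ := hZint.add (Ineg c)
    have hmean : μs = m + A - Tu := by
      rw [← hc]
      have hpt : (∫ ω, max c (min (Z ω) U) ∂μ) =
          ∫ ω, (Z ω + max (c - Z ω) 0 - max (Z ω - U) 0) ∂μ :=
        integral_congr_ae (Filter.Eventually.of_forall fun ω => clamp_eq c U (Z ω) hcU)
      rw [hpt, integral_sub hadd (Ipos U), integral_add hZint (Ineg c)]
    have hcμ : c ≤ μs := by
      rw [← hc]
      calc c = ∫ _ω, c ∂μ := by simp [measure_univ]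
        _ ≤ ∫ ω, max c (min (Z ω) U) ∂μ :=
            integral_mono (integrable_const c) (clamp_bdd_int μ hZm c U)
              (fun ω => le_max_left _ _)
    rw [habs]
    rcases le_total μs m with hcase | hcase
    · -- need A ≤ (1+x) D
      have hkey : A ≤ (1 + Real.exp (-ε)) * D := by
        rcases le_or_gt (1/(1 + Real.exp (-ε))) (μ {ω | Z ω < s₂}).toReal with hq | hq
        · have hATu : A ≤ Tu := by linarith
          have hq1 : 1 ≤ (1 + Real.exp (-ε)) * (μ {ω | Z ω < s₂}).toReal := by
            rw [div_le_iff₀ h1x] at hq; linarith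
          calc A ≤ Tu := hATu
            _ = 1 * Tu := (one_mul _).symm
            _ ≤ ((1 + Real.exp (-ε)) * (μ {ω | Z ω < s₂}).toReal) * Tu :=
              mul_le_mul_of_nonneg_right hq1 hTunn
            _ = (1 + Real.exp (-ε)) * ((μ {ω | Z ω < s₂}).toReal * Tu) := by ring
            _ ≤ (1 + Real.exp (-ε)) * D := mul_le_mul_of_nonneg_left hDc h1x.le
        · have hstep : Real.exp (-ε) <
              (1 + Real.exp (-ε)) * (1 - (μ {ω | Z ω < s₂}).toReal) := by
            rw [lt_div_iff₀ h1x] at hq; nlinarith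
          have hQ1 : A ≤ ∫ ω, max (μs - Z ω) 0 ∂μ := mono_neg c μs hcμ
          have hEQ : 0 ≤ Real.exp ε * ∫ ω, max (μs - Z ω) 0 ∂μ := mul_nonneg hex.le hQnn
          calc A = (Real.exp (-ε) * Real.exp ε) * A := by rw [hxe, one_mul]
            _ = Real.exp (-ε) * (Real.exp ε * A) := by ring
            _ ≤ Real.exp (-ε) * (Real.exp ε * ∫ ω, max (μs - Z ω) 0 ∂μ) := by
                refine mul_le_mul_of_nonneg_left ?_ hexn.le
                exact mul_le_mul_of_nonneg_left hQ1 hex.le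
            _ ≤ ((1 + Real.exp (-ε)) * (1 - (μ {ω | Z ω < s₂}).toReal)) *
                (Real.exp ε * ∫ ω, max (μs - Z ω) 0 ∂μ) :=
              mul_le_mul_of_nonneg_right hstep.le hEQ
            _ = (1 + Real.exp (-ε)) * ((1 - (μ {ω | Z ω < s₂}).toReal) *
                (Real.exp ε * ∫ ω, max (μs - Z ω) 0 ∂μ)) := by ring
            _ ≤ (1 + Real.exp (-ε)) * D := mul_le_mul_of_nonneg_left hDd h1x.le
      have habs2 : |m - μs| = m - μs := abs_of_nonneg (by linarith)
      rw [habs2]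
      linarith
    · -- need Tu ≤ (1+x) D
      have hkey : Tu ≤ (1 + Real.exp (-ε)) * D := by
        rcases le_or_gt (1/(1 + Real.exp (-ε))) (μ {ω | Z ω < s₂}).toReal with hq | hq
        · have hq1 : 1 ≤ (1 + Real.exp (-ε)) * (μ {ω | Z ω < s₂}).toReal := by
            rw [div_le_iff₀ h1x] at hq; linarith
          calc Tu = 1 * Tu := (one_mul _).symm
            _ ≤ ((1 + Real.exp (-ε)) * (μ {ω | Z ω < s₂}).toReal) * Tu :=
              mul_le_mul_of_nonneg_right hq1 hTunn
            _ = (1 + Real.exp (-ε)) * ((μ {ω | Z ω < s₂}).toReal * Tu) := by ring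
            _ ≤ (1 + Real.exp (-ε)) * D := mul_le_mul_of_nonneg_left hDc h1x.le
        · have hstep : Real.exp (-ε) <
              (1 + Real.exp (-ε)) * (1 - (μ {ω | Z ω < s₂}).toReal) := by
            rw [lt_div_iff₀ h1x] at hq; nlinarith
          have hQ1 : Tu ≤ ∫ ω, max (Z ω - μs) 0 ∂μ := mono_pos μs U hμU
          have hQ2 : (∫ ω, max (Z ω - μs) 0 ∂μ) ≤ ∫ ω, max (μs - Z ω) 0 ∂μ := by
            have := mean_diff μs; linarith
          have hEQ : 0 ≤ Real.exp ε * ∫ ω, max (μs - Z ω) 0 ∂μ := mul_nonneg hex.le hQnn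
          calc Tu = (Real.exp (-ε) * Real.exp ε) * Tu := by rw [hxe, one_mul]
            _ = Real.exp (-ε) * (Real.exp ε * Tu) := by ring
            _ ≤ Real.exp (-ε) * (Real.exp ε * ∫ ω, max (μs - Z ω) 0 ∂μ) := by
                refine mul_le_mul_of_nonneg_left ?_ hexn.le
                exact mul_le_mul_of_nonneg_left (hQ1.trans hQ2) hex.le
            _ ≤ ((1 + Real.exp (-ε)) * (1 - (μ {ω | Z ω < s₂}).toReal)) *
                (Real.exp ε * ∫ ω, max (μs - Z ω) 0 ∂μ) :=
              mul_le_mul_of_nonneg_right hstep.le hEQ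
            _ = (1 + Real.exp (-ε)) * ((1 - (μ {ω | Z ω < s₂}).toReal) *
                (Real.exp ε * ∫ ω, max (μs - Z ω) 0 ∂μ)) := by ring
            _ ≤ (1 + Real.exp (-ε)) * D := mul_le_mul_of_nonneg_left hDd h1x.le
      have habs2 : |m - μs| = μs - m := by rw [abs_of_nonpos (by linarith : m - μs ≤ 0)]; ring
      rw [habs2]
      linarith
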